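/- If the remainders of a sequence satisfy s_n - s = c·ω_n for a fixed nonzero constant c and all n, and the ω_n are such that Δ^k(P_{k-1}(n)/ω_n) ≠ 0 for a polynomial P_{k-1} of degree ≤ k-1, then the transformation T_k^{(n)} = Δ^k[P_{k-1}(n)·s_n/ω_n] / Δ^k[P_{k-1}(n)/ω_n] is exact: T_k^{(n)} = s. -/

import Mathlib

/-- Forward difference operator: `Δ f n = f (n+1) - f n`. -/
def fdiff (f : ℕ → ℝ) : ℕ → ℝ := fun n => f (n + 1) - f n

lemma fdiff_iter_add (k : ℕ) : ∀ (f g : ℕ → ℝ) (n : ℕ),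
    fdiff^[k] (fun m => f m + g m) n = fdiff^[k] f n + fdiff^[k] g n := by
  induction k with
  | zero => intro f g n; simp
  | succ k ih =>
    intro f g n
    rw [Function.iterate_succ_apply, Function.iterate_succ_apply,
      Function.iterate_succ_apply]
    have : fdiff (fun m => f m + g m) = fun m => fdiff f m + fdiff g m := by
      funext m; simp [fdiff]; ring
    rw [this, ih]

lemma fdiff_iter_mul (k : ℕ) : ∀ (a : ℝ) (f : ℕ → ℝ) (n : ℕ),
    fdiff^[k] (fun m => a * f m) n = a * fdiff^[k] f n := by
  induction k with
  | zero => intro a f n; simp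
  | succ k ih =>
    intro a f n
    rw [Function.iterate_succ_apply, Function.iterate_succ_apply]
    have : fdiff (fun m => a * f m) = fun m => a * fdiff f m := by
      funext m; simp [fdiff]; ring
    rw [this, ih]

lemma fdiff_iter_poly (k : ℕ) : ∀ (P : Polynomial ℝ), P.degree < (k : ℕ) → ∀ n,
    fdiff^[k] (fun m => P.eval (m : ℝ)) n = 0 := by
  induction k with
  | zero =>
    intro P hP n
    have : P = 0 := by
      by_contra h
      exact absurd hP (not_lt.mpr (le_trans (by norm_num) (Polynomial.zero_le_degree_iff.mpr h)))
    simp [this]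
  | succ k ih =>
    intro P hP n
    rw [Function.iterate_succ_apply]
    set Q := P.comp (Polynomial.X + Polynomial.C 1) - P with hQ
    have heq : fdiff (fun m => P.eval (m : ℝ)) = fun m : ℕ => Q.eval (m : ℝ) := by
      funext m
      simp only [fdiff, hQ, Polynomial.eval_sub, Polynomial.eval_comp, Polynomial.eval_add,
        Polynomial.eval_X, Polynomial.eval_C]
      push_cast
      ring
    rw [heq]
    apply ih
    by_cases hP0 : P = 0
    · rw [hQ, hP0]
      simp only [Polynomial.zero_comp, sub_zero, Polynomial.degree_zero]
      exact WithBot.bot_lt_coe k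
    · have hlc : (P.comp (Polynomial.X + Polynomial.C 1)).leadingCoeff = P.leadingCoeff := by
        rw [Polynomial.leadingCoeff_comp (by rw [Polynomial.natDegree_X_add_C]; norm_num),
          Polynomial.leadingCoeff_X_add_C, one_pow, mul_one]
      have hcne : P.comp (Polynomial.X + Polynomial.C 1) ≠ 0 := by
        intro h
        exact hP0 (Polynomial.leadingCoeff_eq_zero.mp
          (by rw [← hlc, h, Polynomial.leadingCoeff_zero]))
      have hcomp : (P.comp (Polynomial.X + Polynomial.C 1)).degree = P.degree := by
        rw [Polynomial.degree_eq_natDegree hcne, Polynomial.degree_eq_natDegree hP0,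
          Polynomial.natDegree_comp, Polynomial.natDegree_X_add_C, mul_one]
      have hlt : Q.degree < P.degree := by
        rw [hQ]
        exact hcomp ▸ Polynomial.degree_sub_lt hcomp hcne hlc
      have hnd : P.natDegree ≤ k := by
        have := (Polynomial.natDegree_lt_iff_degree_lt hP0).mpr (by exact_mod_cast hP)
        omega
      have : P.degree ≤ (k : ℕ) :=
        le_trans Polynomial.degree_le_natDegree (by exact_mod_cast hnd)
      exact lt_of_lt_of_le hlt this

/-- If s_n - s = c ω_n with c ≠ 0, then the transformation
    T_k^{(n)} = Δ^k[P_{k-1}(n) s_n/ω_n] / Δ^k[P_{k-1}(n)/ω_n] is exact. -/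
theorem levin_type_exactness (k : ℕ) (hk : 1 ≤ k) (s ω : ℕ → ℝ) (L c : ℝ)
    (hc : c ≠ 0) (hω : ∀ n, ω n ≠ 0) (hrel : ∀ n, s n - L = c * ω n)
    (P : Polynomial ℝ) (hP : P.natDegree ≤ k - 1) (n : ℕ)
    (hden : fdiff^[k] (fun m => P.eval (m : ℝ) / ω m) n ≠ 0) :
    fdiff^[k] (fun m => P.eval (m : ℝ) * s m / ω m) n /
        fdiff^[k] (fun m => P.eval (m : ℝ) / ω m) n = L := by
  have hdeg : P.degree < (k : ℕ) := by
    calc P.degree ≤ (P.natDegree : WithBot ℕ) := Polynomial.degree_le_natDegree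
    _ < (k : ℕ) := by
        exact_mod_cast lt_of_le_of_lt hP (Nat.sub_lt (lt_of_lt_of_le one_pos hk) one_pos)
  have key : (fun m : ℕ => P.eval (m : ℝ) * s m / ω m)
      = fun m : ℕ => c * P.eval (m : ℝ) + L * (P.eval (m : ℝ) / ω m) := by
    funext m
    have hs : s m = c * ω m + L := by linarith [hrel m]
    have h1 : c * P.eval (m : ℝ) + L * (P.eval (m : ℝ) / ω m)
        = (c * P.eval (m : ℝ) * ω m + L * P.eval (m : ℝ)) / ω m := by
      rw [add_div, mul_div_assoc, div_self (hω m), mul_one, mul_div_assoc]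
    rw [hs, h1]
    congr 1
    ring
  rw [key, fdiff_iter_add, fdiff_iter_mul, fdiff_iter_mul, fdiff_iter_poly k P hdeg]
  field_simp
  ring
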